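/- arXiv:0802.2730 — 2 statements merged into one kernel-verified Lean document; each statement's English description precedes it below -/
import Mathlib

section
/- Let A=(C,m) be a 3-dimensional toric idealistic cluster, let Q_i be a node of weight m := m_i ≥ 2 whose only child is Q_i(1), of weight m−1, and suppose that the nodes of C proximate to Q_i are exactly the following: Q_i(1); Q_i(1,2), of weight 1; and Q_i(1,2,3^s) for 1 ≤ s ≤ m−2, each of weight 1 (so the label 3 occurs m−2 times in this chain). If the set of labels under Q_i equals {3}, or equals {2,3}, then χ_i = 0. -/
open Finset

/-!
Common framework: 3-dimensional toric constellations and toric idealistic clusters.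
The edge labels `1, 2, 3` of the paper are encoded as `0, 1, 2 : Fin 3`.
-/

/-- A 3-dimensional toric constellation: a finite rooted tree on nodes `0, …, r−1`
(node `0` the root, every child having larger index than its parent), each node having
at most three children, the edges from a node to its children carrying pairwise
distinct labels in `Fin 3`.  `label j` is the label of the edge from `parent j` to `j`
(irrelevant for the root). -/
structure ToricConstellation (r : ℕ) where
  parent : Fin r → Fin r
  label : Fin r → Fin 3
  parent_lt : ∀ i : Fin r, 0 < (i : ℕ) → (parent i : ℕ) < (i : ℕ)
  parent_root : ∀ i : Fin r, (i : ℕ) = 0 → parent i = i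
  label_distinct : ∀ i j : Fin r, 0 < (i : ℕ) → 0 < (j : ℕ) → i ≠ j →
    parent i = parent j → label i ≠ label j

namespace ToricConstellation

variable {r : ℕ}

/-- The ordered triple of vectors of `ℤ³` attached to a node: the root carries the
standard basis, and the child along the edge labelled `a` of a node with cone
`(u₁,u₂,u₃)` carries the triple obtained by replacing `u_a` with `u₁+u₂+u₃`. -/
def cone (C : ToricConstellation r) (i : Fin r) : Fin 3 → (Fin 3 → ℤ) :=
  if h : 0 < (i : ℕ) then
    Function.update (cone C (C.parent i)) (C.label i) (∑ a, cone C (C.parent i) a)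
  else fun a => Pi.single a 1
termination_by (i : ℕ)
decreasing_by all_goals exact C.parent_lt i h

/-- `v(Q) = u₁ + u₂ + u₃`, the sum of the cone vectors of a node. -/
def v (C : ToricConstellation r) (i : Fin r) : Fin 3 → ℤ := ∑ a, cone C i a

/-- `Prox C j i` means `j → i`, i.e. `Q_j` is proximate to `Q_i`:
`j ≠ i` and `v(Q_i)` is an entry of `cone(Q_j)`. -/
def Prox (C : ToricConstellation r) (j i : Fin r) : Prop :=
  j ≠ i ∧ ∃ a : Fin 3, cone C j a = v C i

instance (C : ToricConstellation r) (j i : Fin r) : Decidable (C.Prox j i) := by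
  unfold Prox; infer_instance

/-- `inChain C i a b j = true` iff `j = Q_i(a, b^t)` for some `t ≥ 0`, i.e. `j` is
reached from `i` by one edge labelled `a` followed by `t` edges labelled `b`. -/
def inChain (C : ToricConstellation r) (i : Fin r) (a b : Fin 3) (j : Fin r) : Bool :=
  if h : 0 < (j : ℕ) then
    (decide (C.parent j = i) && decide (C.label j = a)) ||
      (decide (C.label j = b) && inChain C i a b (C.parent j))
  else false
termination_by (j : ℕ)
decreasing_by exact C.parent_lt j h

/-- `LinProx C j i` means `j ↠ i`, i.e. `Q_j` is linearly proximate to `Q_i`. -/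
def LinProx (C : ToricConstellation r) (j i : Fin r) : Prop :=
  ∃ a b : Fin 3, a ≠ b ∧ inChain C i a b j = true

instance (C : ToricConstellation r) (j i : Fin r) : Decidable (C.LinProx j i) := by
  unfold LinProx; infer_instance

/-- `j` is a child of `i`. -/
def IsChild (C : ToricConstellation r) (j i : Fin r) : Prop :=
  0 < (j : ℕ) ∧ C.parent j = i

instance (C : ToricConstellation r) (j i : Fin r) : Decidable (C.IsChild j i) := by
  unfold IsChild; infer_instance

/-- The set `S_i` of labels of the edges on the path from the root to `Q_i`. -/
def labelsUnder (C : ToricConstellation r) (i : Fin r) : Finset (Fin 3) :=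
  if h : 0 < (i : ℕ) then insert (C.label i) (labelsUnder C (C.parent i)) else ∅
termination_by (i : ℕ)
decreasing_by exact C.parent_lt i h

/-- `i` is a weak ancestor of `j` (`i = j` or `i` a strict ancestor of `j`). -/
def anc (C : ToricConstellation r) (i j : Fin r) : Bool :=
  decide (i = j) || (if h : 0 < (j : ℕ) then anc C i (C.parent j) else false)
termination_by (j : ℕ)
decreasing_by exact C.parent_lt j h

/-- The set of nodes weakly above `i` (`i` together with its descendants). -/
def weakAbove (C : ToricConstellation r) (i : Fin r) : Finset (Fin r) :=
  univ.filter (fun j => anc C i j = true)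

end ToricConstellation

/-- A 3-dimensional toric cluster: a toric constellation together with a positive
integer weight for each node. -/
structure ToricCluster (r : ℕ) extends ToricConstellation r where
  m : Fin r → ℤ
  m_pos : ∀ j, 0 < m j

namespace ToricCluster

open ToricConstellation

variable {r : ℕ}

/-- `M_{Q_i}(a,b) := Σ_{t ≥ 0, Q_i(a,b^t) ∈ C} m_{Q_i(a,b^t)}`. -/
def M (A : ToricCluster r) (i : Fin r) (a b : Fin 3) : ℤ :=
  ∑ j ∈ univ.filter (fun j => inChain A.toToricConstellation i a b j = true), A.m j

/-- The cluster is idealistic: the linear proximity inequalities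
`M_{Q_i}(a,b) + M_{Q_i}(b,a) ≤ m_{Q_i}` hold. -/
def Idealistic (A : ToricCluster r) : Prop :=
  ∀ i : Fin r, ∀ a b : Fin 3, a ≠ b → A.M i a b + A.M i b a ≤ A.m i

/-- The set of nodes `j` proximate to `i` (`j → i`). -/
def proxSet (A : ToricCluster r) (i : Fin r) : Finset (Fin r) :=
  univ.filter (fun j => Prox A.toToricConstellation j i)

/-- `B_i`: the set of nodes to which `i` is proximate. -/
def Bset (A : ToricCluster r) (i : Fin r) : Finset (Fin r) :=
  univ.filter (fun j => Prox A.toToricConstellation i j)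

/-- `A_i`: the children `k` of `i` for which there is no `l` with `i → l` and `k → l`. -/
def Aset (A : ToricCluster r) (i : Fin r) : Finset (Fin r) :=
  univ.filter (fun k => IsChild A.toToricConstellation k i ∧
    ¬ ∃ l, Prox A.toToricConstellation i l ∧ Prox A.toToricConstellation k l)

/-- The Euler characteristic `χ_i = χ(E_i°)`. -/
def chi (A : ToricCluster r) (i : Fin r) : ℤ :=
  3 + A.m i * (A.m i - 3)
    - ∑ j ∈ A.proxSet i, A.m j * (A.m j - 1)
    + ∑ j ∈ A.proxSet i,
        (A.m j - ∑ k ∈ (A.proxSet i).filter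
          (fun k => LinProx A.toToricConstellation k j), A.m k)
    + ∑ j ∈ A.Bset i,
        (A.m i - ∑ k ∈ (A.proxSet j).filter
          (fun k => LinProx A.toToricConstellation k i), A.m k)
    - ((A.Aset i).card : ℤ) - 2 * ((A.Bset i).card : ℤ)
    + (((A.Bset i).card.choose 2 : ℕ) : ℤ)

/-- `D_i = m_i² − Σ_{j→i} m_j²`. -/
def D (A : ToricCluster r) (i : Fin r) : ℤ :=
  A.m i ^ 2 - ∑ j ∈ A.proxSet i, A.m j ^ 2

/-- `r_{ab} = m_i − M_{Q_i}(a,b) − M_{Q_i}(b,a)`. -/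
def rab (A : ToricCluster r) (i : Fin r) (a b : Fin 3) : ℤ :=
  A.m i - A.M i a b - A.M i b a

/-- `R_i = r̂_{12} + r̂_{13} + r̂_{23}`, where `r̂_{ab} = r_{ab}` if the remaining third
label does not appear under `Q_i`, and `r̂_{ab} = 0` otherwise.  (Labels `1,2,3` are
encoded as `0,1,2 : Fin 3`.) -/
def R (A : ToricCluster r) (i : Fin r) : ℤ :=
  (if (2 : Fin 3) ∉ labelsUnder A.toToricConstellation i then A.rab i 0 1 else 0)
  + (if (1 : Fin 3) ∉ labelsUnder A.toToricConstellation i then A.rab i 0 2 else 0)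
  + (if (0 : Fin 3) ∉ labelsUnder A.toToricConstellation i then A.rab i 1 2 else 0)

/-- `T_i = 3 − #A_i − 2·#B_i + (#B_i choose 2)`. -/
def T (A : ToricCluster r) (i : Fin r) : ℤ :=
  3 - ((A.Aset i).card : ℤ) - 2 * ((A.Bset i).card : ℤ)
    + (((A.Bset i).card.choose 2 : ℕ) : ℤ)

/-- The nodes to which `i` is proximate, of smaller index: the sums in the recursive
definitions of the numerical data range over the nodes to which `i` is proximate,
which are ancestors of `i` and hence have smaller index (making the recursion
well-founded). -/
def anteSet (A : ToricCluster r) (i : Fin r) : Finset (Fin r) :=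
  univ.filter (fun j => (j : ℕ) < (i : ℕ) ∧ Prox A.toToricConstellation i j)

/-- The numerical datum `N_i := m_i + Σ_{j : i→j} N_j`. -/
def N (A : ToricCluster r) (i : Fin r) : ℤ :=
  A.m i + ∑ j ∈ (A.anteSet i).attach, N A j.1
termination_by (i : ℕ)
decreasing_by
  have hj := j.2
  simp only [anteSet, Finset.mem_filter] at hj
  exact hj.2.1

/-- The numerical datum `ν_i := 3 + Σ_{j : i→j} (ν_j − 1)`. -/
def nu (A : ToricCluster r) (i : Fin r) : ℤ :=
  3 + ∑ j ∈ (A.anteSet i).attach, (nu A j.1 - 1)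
termination_by (i : ℕ)
decreasing_by
  have hj := j.2
  simp only [anteSet, Finset.mem_filter] at hj
  exact hj.2.1

end ToricCluster


open ToricConstellation ToricCluster

namespace ToricConstellation

variable {r : ℕ} (C : ToricConstellation r)

lemma cone_root (i : Fin r) (h : (i : ℕ) = 0) :
    cone C i = fun a => Pi.single a 1 := by
  rw [cone]; simp [h]

lemma cone_step (i : Fin r) (h : 0 < (i : ℕ)) :
    cone C i = Function.update (cone C (C.parent i)) (C.label i) (v C (C.parent i)) := by
  rw [cone]; simp [h, v]

lemma cone_nonneg (i : Fin r) : ∀ c x, 0 ≤ cone C i c x := by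
  by_cases h : 0 < (i : ℕ)
  · intro c x
    rw [cone_step C i h]
    rcases eq_or_ne c (C.label i) with rfl | hc
    · simp only [Function.update_self, v]
      have h' := fun a => cone_nonneg (C.parent i) a x
      have : (∑ a, cone C (C.parent i) a) x = ∑ a, cone C (C.parent i) a x := by simp
      rw [this]
      exact Finset.sum_nonneg fun a _ => h' a
    · rw [Function.update_of_ne hc]
      exact cone_nonneg (C.parent i) c x
  · intro c x
    rw [cone_root C i (by omega)]
    rcases eq_or_ne x c with rfl | hx
    · simp
    · simp [Pi.single_apply, hx.symm]
termination_by (i : ℕ)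
decreasing_by all_goals exact C.parent_lt i h

lemma one_le_sum_cone (i : Fin r) : ∀ c, 1 ≤ ∑ x, cone C i c x := by
  by_cases h : 0 < (i : ℕ)
  · intro c
    rw [cone_step C i h]
    rcases eq_or_ne c (C.label i) with rfl | hc
    · simp only [Function.update_self, v]
      have h0 := one_le_sum_cone (C.parent i) 0
      have h1 := one_le_sum_cone (C.parent i) 1
      have h2 := one_le_sum_cone (C.parent i) 2
      have : ∑ x, (∑ a, cone C (C.parent i) a) x
          = ∑ a, ∑ x, cone C (C.parent i) a x := by
        rw [Finset.sum_comm]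
        simp
      rw [this, Fin.sum_univ_three]
      omega
    · rw [Function.update_of_ne hc]
      exact one_le_sum_cone (C.parent i) c
  · intro c
    rw [cone_root C i (by omega)]
    simp
termination_by (i : ℕ)
decreasing_by all_goals exact C.parent_lt i h

lemma sum_v_eq (i : Fin r) : ∑ x, v C i x = ∑ c, ∑ x, cone C i c x := by
  rw [Finset.sum_comm]; simp [v]

lemma three_le_sum_v (i : Fin r) : 3 ≤ ∑ x, v C i x := by
  have hS : ∑ c' : Fin 3, ∑ x, cone C i c' x
      = (∑ x, cone C i 0 x) + (∑ x, cone C i 1 x) + (∑ x, cone C i 2 x) :=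
    Fin.sum_univ_three _
  rw [sum_v_eq, hS]
  have h0 := one_le_sum_cone C i 0
  have h1 := one_le_sum_cone C i 1
  have h2 := one_le_sum_cone C i 2
  omega

lemma sum_cone_le (i : Fin r) (c : Fin 3) :
    ∑ x, cone C i c x + 2 ≤ ∑ x, v C i x := by
  have hS : ∑ c' : Fin 3, ∑ x, cone C i c' x
      = (∑ x, cone C i 0 x) + (∑ x, cone C i 1 x) + (∑ x, cone C i 2 x) :=
    Fin.sum_univ_three _
  rw [sum_v_eq, hS]
  have h0 := one_le_sum_cone C i 0
  have h1 := one_le_sum_cone C i 1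
  have h2 := one_le_sum_cone C i 2
  fin_cases c <;> simp only [Fin.zero_eta, Fin.mk_one, Fin.reduceFinMk] <;> omega

lemma sum_v_parent_lt (i : Fin r) (h : 0 < (i : ℕ)) :
    ∑ x, v C (C.parent i) x + 2 ≤ ∑ x, v C i x := by
  have key : ∑ x, v C i x
      = 2 * ∑ x, v C (C.parent i) x - ∑ x, cone C (C.parent i) (C.label i) x := by
    have : v C i = fun x => v C (C.parent i) x + (v C (C.parent i) x - cone C (C.parent i) (C.label i) x) := by
      funext x
      simp only [v, cone_step C i h]
      have : ∀ (f : Fin 3 → Fin 3 → ℤ) (l : Fin 3) (w : Fin 3 → ℤ),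
          (∑ a, Function.update f l w a) x = w x + ∑ a, f a x - f l x := by
        intro f l w
        fin_cases l <;> simp [Fin.sum_univ_three, Function.update] <;> ring
      rw [this]
      simp only [v, Finset.sum_apply]
      ring
    rw [this]
    rw [Finset.sum_add_distrib, Finset.sum_sub_distrib]
    ring
  have := sum_cone_le C (C.parent i) (C.label i)
  omega

end ToricConstellation
namespace ToricConstellation

variable {r : ℕ} (C : ToricConstellation r)

/-- The cone of a node as a matrix (rows = cone vectors). -/
def coneM (i : Fin r) : Matrix (Fin 3) (Fin 3) ℤ := Matrix.of (cone C i)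

lemma coneM_root (i : Fin r) (h : (i : ℕ) = 0) : coneM C i = 1 := by
  ext c x
  simp only [coneM, cone_root C i h, Matrix.of_apply, Matrix.one_apply, Pi.single_apply]
  by_cases hxc : x = c
  · simp [hxc]
  · rw [if_neg hxc, if_neg (fun hh => hxc hh.symm)]

lemma det_updateRow_sum_rows (M : Matrix (Fin 3) (Fin 3) ℤ) (l : Fin 3) :
    (M.updateRow l (∑ a, M a)).det = M.det := by
  have hsum : (∑ a, M a) = M 0 + (M 1 + M 2) := by
    exact (Fin.sum_univ_three _).trans (add_assoc _ _ _)
  have key : ∀ c : Fin 3, (M.updateRow l (M c)).det = if c = l then M.det else 0 := by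
    intro c
    rcases eq_or_ne c l with rfl | hc
    · rw [Matrix.updateRow_eq_self, if_pos rfl]
    · rw [if_neg hc]
      refine Matrix.det_zero_of_row_eq (Ne.symm hc) ?_
      rw [Matrix.updateRow_self, Matrix.updateRow_ne hc]
  rw [hsum, Matrix.det_updateRow_add, Matrix.det_updateRow_add, key 0, key 1, key 2]
  fin_cases l <;> simp

lemma coneM_step (i : Fin r) (h : 0 < (i : ℕ)) :
    coneM C i = (coneM C (C.parent i)).updateRow (C.label i) (∑ a, coneM C (C.parent i) a) := by
  ext c x
  simp only [coneM, cone_step C i h, Matrix.of_apply, Matrix.updateRow]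
  rcases eq_or_ne c (C.label i) with rfl | hc
  · simp [v]
    show _ = Function.update (cone C (C.parent i)) (C.label i) (∑ a, cone C (C.parent i) a) (C.label i) x
    rw [Function.update_self]; exact (Finset.sum_apply x _ _).symm
  · show _ = Function.update (cone C (C.parent i)) (C.label i) (∑ a, cone C (C.parent i) a) c x
    simp only [Function.update_of_ne hc]

lemma det_coneM (i : Fin r) : (coneM C i).det = 1 := by
  by_cases h : 0 < (i : ℕ)
  · rw [coneM_step C i h, det_updateRow_sum_rows]
    exact det_coneM (C.parent i)
  · rw [coneM_root C i (by omega)]; simp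
termination_by (i : ℕ)
decreasing_by exact C.parent_lt i h

lemma cone_pairwise_ne (i : Fin r) {c c' : Fin 3} (h : c ≠ c') :
    cone C i c ≠ cone C i c' := by
  intro heq
  have : (coneM C i).det = 0 := Matrix.det_zero_of_row_eq h heq
  rw [det_coneM] at this
  exact one_ne_zero this

/-- uniqueness of coefficients with respect to the cone basis -/
lemma coeff_unique (i : Fin r) (x y : Fin 3 → ℤ)
    (h : ∀ t, ∑ b, x b * cone C i b t = ∑ b, y b * cone C i b t) : x = y := by
  have hdet : IsUnit (coneM C i).det := by rw [det_coneM]; exact isUnit_one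
  have hx : Matrix.vecMul x (coneM C i) = Matrix.vecMul y (coneM C i) := by
    funext t
    simpa [Matrix.vecMul, dotProduct, coneM] using h t
  have := congrArg (fun z => Matrix.vecMul z (coneM C i)⁻¹) hx
  simpa [Matrix.vecMul_vecMul, Matrix.mul_nonsing_inv _ hdet] using this

end ToricConstellation
namespace ToricConstellation

variable {r : ℕ} (C : ToricConstellation r)

lemma anc_unfold (x j : Fin r) :
    anc C x j = (decide (x = j) || (if h : 0 < (j : ℕ) then anc C x (C.parent j) else false)) := by
  rw [anc]

lemma anc_refl (x : Fin r) : anc C x x = true := by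
  rw [anc_unfold]; simp

lemma anc_step (x j : Fin r) (hj : 0 < (j : ℕ)) (h : anc C x (C.parent j) = true) :
    anc C x j = true := by
  rw [anc_unfold]; simp [hj, h]

lemma anc_le {x j : Fin r} (h : anc C x j = true) : (x : ℕ) ≤ (j : ℕ) := by
  rw [anc_unfold] at h
  rcases Bool.or_eq_true_iff.mp h with h1 | h2
  · rw [of_decide_eq_true h1]
  · by_cases hj : 0 < (j : ℕ)
    · rw [dif_pos hj] at h2
      have := anc_le h2
      have := C.parent_lt j hj
      omega
    · rw [dif_neg hj] at h2; exact absurd h2 (by simp)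
termination_by (j : ℕ)
decreasing_by exact C.parent_lt j hj

lemma anc_cases {x j : Fin r} (h : anc C x j = true) :
    x = j ∨ (0 < (j : ℕ) ∧ anc C x (C.parent j) = true) := by
  rw [anc_unfold] at h
  rcases Bool.or_eq_true_iff.mp h with h1 | h2
  · exact Or.inl (of_decide_eq_true h1)
  · by_cases hj : 0 < (j : ℕ)
    · rw [dif_pos hj] at h2; exact Or.inr ⟨hj, h2⟩
    · rw [dif_neg hj] at h2; exact absurd h2 (by simp)

lemma anc_root (z j : Fin r) (hz : (z : ℕ) = 0) : anc C z j = true := by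
  by_cases hj : 0 < (j : ℕ)
  · exact anc_step C z j hj (anc_root z (C.parent j) hz)
  · have : z = j := Fin.ext (by omega)
    rw [this]; exact anc_refl C j
termination_by (j : ℕ)
decreasing_by exact C.parent_lt j hj

/-- first step towards a strict descendant -/
lemma anc_first_step {z j : Fin r} (h : anc C z j = true) (hne : j ≠ z) :
    ∃ W : Fin r, 0 < (W : ℕ) ∧ C.parent W = z ∧ anc C W j = true := by
  rcases anc_cases C h with h1 | ⟨hj, h2⟩
  · exact absurd h1.symm hne
  · rcases eq_or_ne (C.parent j) z with he | hne'
    · exact ⟨j, hj, he, anc_refl C j⟩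
    · obtain ⟨W, h1, h2, h3⟩ := anc_first_step h2 hne'
      exact ⟨W, h1, h2, anc_step C W j hj h3⟩
termination_by (j : ℕ)
decreasing_by exact C.parent_lt j hj

/-- transition matrix from `cone Z` to `cone D` (meaningful when `anc Z D`) -/
def mat (Z : Fin r) (D : Fin r) : Matrix (Fin 3) (Fin 3) ℤ :=
  if D = Z then 1
  else if h : 0 < (D : ℕ) then
    (mat Z (C.parent D)).updateRow (C.label D) (∑ c, mat Z (C.parent D) c)
  else 1
termination_by (D : ℕ)
decreasing_by all_goals exact C.parent_lt D h

lemma mat_self (Z : Fin r) : mat C Z Z = 1 := by rw [mat]; simp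

lemma mat_step (Z D : Fin r) (hD : 0 < (D : ℕ)) (hne : D ≠ Z) :
    mat C Z D = (mat C Z (C.parent D)).updateRow (C.label D) (∑ c, mat C Z (C.parent D) c) := by
  rw [mat]; simp [hD, hne]

lemma mat_nonneg (Z D : Fin r) : ∀ c b, 0 ≤ mat C Z D c b := by
  rcases eq_or_ne D Z with rfl | hne
  · rw [mat_self]; intro c b
    rcases eq_or_ne c b with rfl | h
    · simp
    · simp [Matrix.one_apply, h]
  · by_cases hD : 0 < (D : ℕ)
    · rw [mat_step C Z D hD hne]
      intro c b
      have ih := mat_nonneg Z (C.parent D)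
      rcases eq_or_ne c (C.label D) with rfl | hc
      · rw [Matrix.updateRow_self]
        have : (∑ c', mat C Z (C.parent D) c') b = ∑ c', mat C Z (C.parent D) c' b := Finset.sum_apply _ _ _
        rw [this]
        exact Finset.sum_nonneg fun c' _ => ih c' b
      · rw [Matrix.updateRow_ne hc]; exact ih c b
    · rw [mat]; simp [hne, hD]
      intro c b
      rcases eq_or_ne c b with rfl | h
      · simp
      · simp [Matrix.one_apply, h]
termination_by (D : ℕ)
decreasing_by exact C.parent_lt D hD

lemma mat_col_pos (Z D : Fin r) : ∀ b, ∃ c, 0 < mat C Z D c b := by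
  rcases eq_or_ne D Z with rfl | hne
  · rw [mat_self]; intro b; exact ⟨b, by simp⟩
  · by_cases hD : 0 < (D : ℕ)
    · rw [mat_step C Z D hD hne]
      intro b
      obtain ⟨c0, hc0⟩ := mat_col_pos Z (C.parent D) b
      rcases eq_or_ne c0 (C.label D) with rfl | hc
      · refine ⟨C.label D, ?_⟩
        rw [Matrix.updateRow_self]
        have he : (∑ c', mat C Z (C.parent D) c') b = ∑ c', mat C Z (C.parent D) c' b := Finset.sum_apply _ _ _
        rw [he]
        have h0 := fun c' => mat_nonneg C Z (C.parent D) c' b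
        calc 0 < mat C Z (C.parent D) (C.label D) b := hc0
          _ ≤ ∑ c', mat C Z (C.parent D) c' b :=
            Finset.single_le_sum (fun c' _ => h0 c') (Finset.mem_univ (C.label D))
      · exact ⟨c0, by rw [Matrix.updateRow_ne hc]; exact hc0⟩
    · rw [mat]; simp [hne, hD]
      intro b; exact ⟨b, by simp⟩
termination_by (D : ℕ)
decreasing_by exact C.parent_lt D hD

/-- column sums of the transition matrix -/
def alpha (Z D : Fin r) (b : Fin 3) : ℤ := ∑ c, mat C Z D c b

lemma alpha_pos (Z D : Fin r) (b : Fin 3) : 1 ≤ alpha C Z D b := by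
  obtain ⟨c0, hc0⟩ := mat_col_pos C Z D b
  have h0 := fun c' => mat_nonneg C Z D c' b
  calc (1 : ℤ) ≤ mat C Z D c0 b := hc0
    _ ≤ alpha C Z D b := Finset.single_le_sum (fun c' _ => h0 c') (Finset.mem_univ c0)

lemma alpha_self (Z : Fin r) (b : Fin 3) : alpha C Z Z b = 1 := by
  simp [alpha, mat_self, Matrix.one_apply]

/-- `cone D` expressed in terms of `cone Z` via the transition matrix. -/
lemma cone_eq_mat {Z D : Fin r} (h : anc C Z D = true) :
    ∀ c t, cone C D c t = ∑ b, mat C Z D c b * cone C Z b t := by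
  rcases eq_or_ne D Z with rfl | hne
  · intro c t
    rw [mat_self, Finset.sum_eq_single c]
    · simp [Matrix.one_apply]
    · intro b _ hb
      simp [Matrix.one_apply, Ne.symm hb]
    · simp
  · obtain ⟨hD, hanc⟩ := (anc_cases C h).resolve_left (fun hh => hne hh.symm)
    intro c t
    have ih := cone_eq_mat (Z := Z) (D := C.parent D) hanc
    rw [cone_step C D hD, mat_step C Z D hD hne]
    rcases eq_or_ne c (C.label D) with rfl | hc
    · rw [Function.update_self, Matrix.updateRow_self]
      have hv : v C (C.parent D) t = ∑ c', cone C (C.parent D) c' t := by simp [v]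
      rw [hv]
      have : ∀ b, (∑ c', mat C Z (C.parent D) c') b = ∑ c', mat C Z (C.parent D) c' b := by
        intro b; exact Finset.sum_apply _ _ _
      calc ∑ c', cone C (C.parent D) c' t
          = ∑ c', ∑ b, mat C Z (C.parent D) c' b * cone C Z b t := by
            exact Finset.sum_congr rfl fun c' _ => ih c' t
        _ = ∑ b, (∑ c', mat C Z (C.parent D) c' b) * cone C Z b t := by
            rw [Finset.sum_comm]
            exact Finset.sum_congr rfl fun b _ => by rw [Finset.sum_mul]
        _ = ∑ b, (∑ c', mat C Z (C.parent D) c') b * cone C Z b t := by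
            exact Finset.sum_congr rfl fun b _ => by rw [this b]
    · rw [Function.update_of_ne hc, Matrix.updateRow_ne hc]
      exact ih c t
termination_by (D : ℕ)
decreasing_by exact C.parent_lt D hD

lemma v_eq_alpha {Z D : Fin r} (h : anc C Z D = true) :
    ∀ t, v C D t = ∑ b, alpha C Z D b * cone C Z b t := by
  intro t
  have : v C D t = ∑ c, cone C D c t := by simp [v]
  rw [this]
  calc ∑ c, cone C D c t = ∑ c, ∑ b, mat C Z D c b * cone C Z b t :=
        Finset.sum_congr rfl fun c _ => cone_eq_mat C h c t
    _ = ∑ b, (∑ c, mat C Z D c b) * cone C Z b t := by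
        rw [Finset.sum_comm]
        exact Finset.sum_congr rfl fun b _ => by rw [Finset.sum_mul]
    _ = ∑ b, alpha C Z D b * cone C Z b t := rfl

end ToricConstellation
namespace ToricConstellation

variable {r : ℕ} (C : ToricConstellation r)

lemma updateRow_mul' (A B : Matrix (Fin 3) (Fin 3) ℤ) (l : Fin 3) (w : Fin 3 → ℤ) :
    A.updateRow l w * B = (A * B).updateRow l (Matrix.vecMul w B) := by
  ext c b
  rcases eq_or_ne c l with rfl | hc
  · simp [Matrix.mul_apply, Matrix.updateRow_self, Matrix.vecMul, dotProduct]
  · simp [Matrix.mul_apply, Matrix.updateRow_ne hc]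

lemma mat_comp {Z W D : Fin r} (hZW : anc C Z W = true) (hWD : anc C W D = true) :
    mat C Z D = mat C W D * mat C Z W := by
  rcases eq_or_ne D W with rfl | hne
  · rw [mat_self, Matrix.one_mul]
  · obtain ⟨hD, hanc⟩ := (anc_cases C hWD).resolve_left (fun hh => hne hh.symm)
    have ih := mat_comp (Z := Z) (W := W) (D := C.parent D) hZW hanc
    have hDZ : D ≠ Z := by
      have h1 := anc_le C hZW
      have h2 := anc_le C hanc
      have h3 := C.parent_lt D hD
      intro hh
      have h4 : (D : ℕ) = (Z : ℕ) := by rw [hh]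
      omega
    rw [mat_step C Z D hD hDZ, mat_step C W D hD hne, updateRow_mul', ih]
    congr 1
    have : Matrix.vecMul (∑ c, mat C W (C.parent D) c) (mat C Z W)
        = ∑ c, Matrix.vecMul (mat C W (C.parent D) c) (mat C Z W) := by
      funext b
      simp only [Matrix.vecMul, dotProduct, Finset.sum_apply]
      rw [Finset.sum_comm]
      exact Finset.sum_congr rfl fun k _ => by
        rw [show (∑ c, mat C W (C.parent D) c) k = ∑ c, mat C W (C.parent D) c k from
          Finset.sum_apply _ _ _, Finset.sum_mul]
    rw [this]
    funext b
    have : ∀ c, Matrix.vecMul (mat C W (C.parent D) c) (mat C Z W)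
        = (mat C W (C.parent D) * mat C Z W) c := by
      intro c; funext b'; simp [Matrix.mul_apply, Matrix.vecMul, dotProduct]
    simp only [this, ih]
termination_by (D : ℕ)
decreasing_by exact C.parent_lt D hD

lemma mat_child {Z W : Fin r} (hW : 0 < (W : ℕ)) (hp : C.parent W = Z) :
    mat C Z W = Matrix.updateRow 1 (C.label W) (fun _ => 1) := by
  have hne : W ≠ Z := by
    have h1 := C.parent_lt W hW
    rw [hp] at h1
    intro hh
    have h4 : (W : ℕ) = (Z : ℕ) := by rw [hh]
    omega
  rw [mat_step C Z W hW hne, hp, mat_self]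
  have : (∑ c, (1 : Matrix (Fin 3) (Fin 3) ℤ) c) = (fun _ => (1:ℤ)) := by
    funext b
    refine (Finset.sum_apply b _ _).trans ?_
    simp [Matrix.one_apply]
  rw [this]

lemma alpha_child_lt {Z W D : Fin r} (hW : 0 < (W : ℕ)) (hp : C.parent W = Z)
    (hWD : anc C W D = true) :
    ∀ c, c ≠ C.label W → alpha C Z D (C.label W) < alpha C Z D c := by
  intro c hc
  have hZW : anc C Z W = true := by
    refine anc_step C Z W hW ?_
    rw [hp]; exact anc_refl C Z
  have hcomp := mat_comp C hZW hWD
  have hch := mat_child C hW hp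
  have key : ∀ b, alpha C Z D b
      = alpha C W D (C.label W) + (if b = C.label W then 0 else alpha C W D b) := by
    intro b
    simp only [alpha, hcomp, Matrix.mul_apply, hch]
    rw [Finset.sum_comm]
    have hentry : ∀ k, (Matrix.updateRow 1 (C.label W) (fun _ => (1:ℤ))) k b
        = if k = C.label W then 1 else if k = b then 1 else 0 := by
      intro k
      rcases eq_or_ne k (C.label W) with rfl | hk
      · simp
      · rw [Matrix.updateRow_ne hk, if_neg hk]
        simp [Matrix.one_apply]
    have : ∀ k, ∑ c', mat C W D c' k * (Matrix.updateRow 1 (C.label W) (fun _ => (1:ℤ))) k b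
        = (if k = C.label W then 1 else if k = b then 1 else 0) * ∑ c', mat C W D c' k := by
      intro k
      rw [hentry k, ← Finset.sum_mul, mul_comm]
    rw [Finset.sum_congr rfl fun k _ => this k]
    rcases eq_or_ne b (C.label W) with rfl | hb
    · rw [Finset.sum_eq_single (C.label W)]
      · simp [alpha]
      · intro k _ hk
        rw [if_neg hk, if_neg hk, zero_mul]
      · simp
    · rw [if_neg hb]
      have hsummand : ∀ k, (if k = C.label W then (1:ℤ) else if k = b then 1 else 0)
            * ∑ c', mat C W D c' k
          = (if k = C.label W then ∑ c', mat C W D c' k else 0)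
            + (if k = b then ∑ c', mat C W D c' k else 0) := by
        intro k
        rcases eq_or_ne k (C.label W) with rfl | h1
        · rw [if_pos rfl, if_pos rfl, if_neg (Ne.symm hb)]
          ring
        · rw [if_neg h1, if_neg h1]
          rcases eq_or_ne k b with rfl | h2
          · rw [if_pos rfl, if_pos rfl]; ring
          · rw [if_neg h2, if_neg h2]; ring
      rw [Finset.sum_congr rfl fun k _ => hsummand k, Finset.sum_add_distrib,
        Finset.sum_ite_eq', Finset.sum_ite_eq']
      simp [alpha]
  have h1 := key (C.label W)
  have h2 := key c
  rw [if_pos rfl] at h1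
  rw [if_neg hc] at h2
  have := alpha_pos C W D c
  omega

/-- `v` is injective above a common ancestor. -/
lemma v_inj_above : ∀ n : ℕ, ∀ Z j j' : Fin r,
    ((j : ℕ) - (Z : ℕ)) + ((j' : ℕ) - (Z : ℕ)) ≤ n →
    anc C Z j = true → anc C Z j' = true → v C j = v C j' → j = j' := by
  intro n
  induction n with
  | zero =>
    intro Z j j' hn hj hj' _
    have h1 := anc_le C hj
    have h2 := anc_le C hj'
    have : (j : ℕ) = (Z : ℕ) := by omega
    have : j = Z := Fin.ext this
    subst this
    have : (j' : ℕ) = (j : ℕ) := by omega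
    exact (Fin.ext this).symm
  | succ n ih =>
    intro Z j j' hn hj hj' hv
    have halpha : alpha C Z j = alpha C Z j' := by
      refine coeff_unique C Z _ _ fun t => ?_
      rw [← v_eq_alpha C hj t, ← v_eq_alpha C hj' t, hv]
    rcases eq_or_ne j Z with rfl | hjZ
    · rcases eq_or_ne j' j with rfl | hj'Z
      · rfl
      · obtain ⟨W, hW, hp, hWj'⟩ := anc_first_step C hj' hj'Z
        have hlt := alpha_child_lt C hW hp hWj'
        obtain ⟨c, hc⟩ : ∃ c, c ≠ C.label W := by
          rcases eq_or_ne (C.label W) 0 with h0 | h0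
          · exact ⟨1, by rw [h0]; decide⟩
          · exact ⟨0, Ne.symm h0⟩
        have := hlt c hc
        rw [← halpha] at this
        rw [alpha_self, alpha_self] at this
        omega
    · rcases eq_or_ne j' Z with rfl | hj'Z
      · obtain ⟨W, hW, hp, hWj⟩ := anc_first_step C hj hjZ
        have hlt := alpha_child_lt C hW hp hWj
        obtain ⟨c, hc⟩ : ∃ c, c ≠ C.label W := by
          rcases eq_or_ne (C.label W) 0 with h0 | h0
          · exact ⟨1, by rw [h0]; decide⟩
          · exact ⟨0, Ne.symm h0⟩
        have := hlt c hc
        rw [halpha] at this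
        rw [alpha_self, alpha_self] at this
        omega
      · obtain ⟨W, hW, hp, hWj⟩ := anc_first_step C hj hjZ
        obtain ⟨W', hW', hp', hWj'⟩ := anc_first_step C hj' hj'Z
        rcases eq_or_ne W W' with rfl | hWW
        · refine ih W j j' ?_ hWj hWj' hv
          have hZW : (Z : ℕ) < (W : ℕ) := by
            have := C.parent_lt W hW; rw [hp] at this; exact this
          have h1 := anc_le C hWj
          have h2 := anc_le C hWj'
          omega
        · exfalso
          have hlab : C.label W ≠ C.label W' := by
            refine C.label_distinct W W' hW hW' hWW ?_
            rw [hp, hp']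
          have h1 := alpha_child_lt C hW hp hWj (C.label W') (Ne.symm hlab)
          have h2 := alpha_child_lt C hW' hp' hWj' (C.label W) hlab
          rw [← halpha] at h2
          omega

lemma v_injective {j j' : Fin r} (hv : v C j = v C j') : j = j' := by
  have hr : 0 < r := j.pos
  have hanc := anc_root C ⟨0, hr⟩ j rfl
  have hanc' := anc_root C ⟨0, hr⟩ j' rfl
  exact v_inj_above C ((j : ℕ) + (j' : ℕ)) ⟨0, hr⟩ j j' (by omega) hanc hanc' hv

end ToricConstellation
namespace ToricConstellation

variable {r : ℕ} (C : ToricConstellation r)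

lemma inChain_elim {i a b} {j : Fin r} (h : inChain C i a b j = true) :
    0 < (j : ℕ) ∧ ((C.parent j = i ∧ C.label j = a) ∨
      (C.label j = b ∧ inChain C i a b (C.parent j) = true)) := by
  rw [inChain] at h
  by_cases hj : 0 < (j : ℕ)
  · refine ⟨hj, ?_⟩
    rw [dif_pos hj] at h
    rcases Bool.or_eq_true_iff.mp h with h1 | h2
    · rcases Bool.and_eq_true_iff.mp h1 with ⟨ha, hb⟩
      exact Or.inl ⟨of_decide_eq_true ha, of_decide_eq_true hb⟩
    · rcases Bool.and_eq_true_iff.mp h2 with ⟨ha, hb⟩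
      exact Or.inr ⟨of_decide_eq_true ha, hb⟩
  · rw [dif_neg hj] at h
    exact absurd h (by simp)

lemma inChain_child {i a b} {j : Fin r} (hj : 0 < (j : ℕ)) (hp : C.parent j = i)
    (hl : C.label j = a) : inChain C i a b j = true := by
  rw [inChain, dif_pos hj]
  simp [hp, hl]

lemma inChain_extend {i a b} {j : Fin r} (hj : 0 < (j : ℕ)) (hl : C.label j = b)
    (h : inChain C i a b (C.parent j) = true) : inChain C i a b j = true := by
  rw [inChain, dif_pos hj]
  simp [hl, h]

lemma inChain_lt {i a b} {j : Fin r} (h : inChain C i a b j = true) : (i : ℕ) < (j : ℕ) := by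
  obtain ⟨hj, h1 | h2⟩ := inChain_elim C h
  · have := C.parent_lt j hj
    rw [h1.1] at this
    exact this
  · have h3 := inChain_lt h2.2
    have := C.parent_lt j hj
    omega
termination_by (j : ℕ)
decreasing_by exact C.parent_lt j hj

lemma labelsUnder_root (i : Fin r) (h : (i : ℕ) = 0) : labelsUnder C i = ∅ := by
  rw [labelsUnder]; simp [h]

lemma labelsUnder_step (i : Fin r) (h : 0 < (i : ℕ)) :
    labelsUnder C i = insert (C.label i) (labelsUnder C (C.parent i)) := by
  rw [labelsUnder]; simp [h]

lemma cone_of_not_label (i : Fin r) (c : Fin 3) (h : c ∉ labelsUnder C i) :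
    cone C i c = Pi.single c 1 := by
  by_cases hi : 0 < (i : ℕ)
  · rw [labelsUnder_step C i hi, Finset.mem_insert] at h
    push_neg at h
    rw [cone_step C i hi, Function.update_of_ne h.1]
    exact cone_of_not_label (C.parent i) c h.2
  · rw [cone_root C i (by omega)]
termination_by (i : ℕ)
decreasing_by exact C.parent_lt i hi

lemma cone_of_label (i : Fin r) (c : Fin 3) (h : c ∈ labelsUnder C i) :
    ∃ a : Fin r, (a : ℕ) < (i : ℕ) ∧ cone C i c = v C a := by
  by_cases hi : 0 < (i : ℕ)
  · rw [labelsUnder_step C i hi, Finset.mem_insert] at h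
    rcases eq_or_ne c (C.label i) with rfl | hc
    · refine ⟨C.parent i, C.parent_lt i hi, ?_⟩
      rw [cone_step C i hi, Function.update_self]
    · obtain ⟨a, ha, he⟩ := cone_of_label (C.parent i) c (h.resolve_left hc)
      refine ⟨a, by have := C.parent_lt i hi; omega, ?_⟩
      rw [cone_step C i hi, Function.update_of_ne hc, he]
  · rw [labelsUnder_root C i (by omega)] at h
    exact absurd h (Finset.notMem_empty c)
termination_by (i : ℕ)
decreasing_by exact C.parent_lt i hi

lemma single_ne_v (c : Fin 3) (j : Fin r) : Pi.single c (1:ℤ) ≠ v C j := by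
  intro h
  have h3 := three_le_sum_v C j
  have h1 : ∑ x, Pi.single c (1:ℤ) x = 1 := by
    rw [Finset.sum_eq_single c]
    · simp
    · intro b _ hb; exact Pi.single_eq_of_ne hb 1
    · simp
  rw [h] at h1
  omega

/-- an entry of the cone of `i` can never be `v i` itself -/
lemma cone_entry_ne_v (i : Fin r) (c : Fin 3) (j : Fin r)
    (hsum : ∑ x, v C j x ≥ ∑ x, v C i x) (h : cone C i c = v C j) : False := by
  have h1 := sum_cone_le C i c
  rw [h] at h1
  omega

end ToricConstellation
set_option maxHeartbeats 1000000 in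
theorem stmt8 {r : ℕ} (A : ToricCluster r) (hA : A.Idealistic)
    (i P : Fin r) (mm : ℕ) (hmm : 2 ≤ mm) (hmi : A.m i = (mm : ℤ))
    (hchild : Finset.univ.filter
        (fun j => IsChild A.toToricConstellation j i) = {P})
    (hPlab : A.toToricConstellation.label P = 0)
    (hmP : A.m P = (mm : ℤ) - 1)
    (Q : ℕ → Fin r)
    (hQ1 : IsChild A.toToricConstellation (Q 1) P
        ∧ A.toToricConstellation.label (Q 1) = 1)
    (hQs : ∀ s, 1 ≤ s → s ≤ mm - 2 →
        IsChild A.toToricConstellation (Q (s + 1)) (Q s)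
        ∧ A.toToricConstellation.label (Q (s + 1)) = 2)
    (hWQ : ∀ s, 1 ≤ s → s ≤ mm - 1 → A.m (Q s) = 1)
    (hprox : A.proxSet i = insert P ((Finset.Icc 1 (mm - 1)).image Q))
    (hS : labelsUnder A.toToricConstellation i = {2}
        ∨ labelsUnder A.toToricConstellation i = {1, 2}) :
    A.chi i = 0 := by
  set C := A.toToricConstellation with hCdef
  -- basic structure facts
  have hi0 : 0 < (i : ℕ) := by
    by_contra h
    have h0 : (i : ℕ) = 0 := by omega
    have := labelsUnder_root C i h0
    rcases hS with h | h <;> rw [this] at h <;> exact absurd h.symm (by simp)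
  have hchild_eq : ∀ k, IsChild C k i → k = P := by
    intro k hk
    have : k ∈ Finset.univ.filter (fun j => IsChild C j i) :=
      Finset.mem_filter.mpr ⟨Finset.mem_univ k, hk⟩
    rw [hchild] at this
    exact Finset.mem_singleton.mp this
  have hPchild : IsChild C P i := by
    have : P ∈ Finset.univ.filter (fun j => IsChild C j i) := by
      rw [hchild]; exact Finset.mem_singleton_self P
    exact (Finset.mem_filter.mp this).2
  obtain ⟨hP0, hPp⟩ := hPchild
  have hiP : (i : ℕ) < (P : ℕ) := by have := C.parent_lt P hP0; rw [hPp] at this; exact this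
  obtain ⟨⟨hQ10, hQ1p⟩, hQ1lab⟩ := hQ1
  have hPQ1 : (P : ℕ) < (Q 1 : ℕ) := by
    have := C.parent_lt (Q 1) hQ10; rw [hQ1p] at this; exact this
  have hQstep : ∀ u, 1 ≤ u → u ≤ mm - 2 → (Q u : ℕ) < (Q (u+1) : ℕ) := by
    intro u h1 h2
    obtain ⟨⟨h0, hp⟩, _⟩ := hQs u h1 h2
    have := C.parent_lt (Q (u+1)) h0; rw [hp] at this; exact this
  have hQmono : ∀ s t, 1 ≤ s → s < t → t ≤ mm - 1 → (Q s : ℕ) < (Q t : ℕ) := by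
    intro s t hs hst htm
    induction t with
    | zero => omega
    | succ u ihu =>
      rcases eq_or_lt_of_le (Nat.succ_le_of_lt hst) with h | h
      · have : s = u := by omega
        subst this
        exact hQstep s hs (by omega)
      · have h1 := ihu (by omega) (by omega)
        have h2 := hQstep u (by omega) (by omega)
        omega
  have hPQ : ∀ s, 1 ≤ s → s ≤ mm - 1 → (P : ℕ) < (Q s : ℕ) := by
    intro s h1 h2
    rcases eq_or_lt_of_le h1 with h | h
    · rw [← h]; exact hPQ1
    · have := hQmono 1 s (le_refl 1) h h2; omega
  have hQ0 : ∀ s, 1 ≤ s → s ≤ mm - 1 → 0 < (Q s : ℕ) := by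
    intro s h1 h2; have := hPQ s h1 h2; omega
  have hQparent : ∀ s, 2 ≤ s → s ≤ mm - 1 → C.parent (Q s) = Q (s - 1) := by
    intro s h1 h2
    obtain ⟨⟨_, hp⟩, _⟩ := hQs (s-1) (by omega) (by omega)
    have : s - 1 + 1 = s := by omega
    rw [this] at hp
    exact hp
  have hQlab : ∀ s, 2 ≤ s → s ≤ mm - 1 → C.label (Q s) = 2 := by
    intro s h1 h2
    obtain ⟨_, hl⟩ := hQs (s-1) (by omega) (by omega)
    have : s - 1 + 1 = s := by omega
    rw [this] at hl
    exact hl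
  -- cone facts along the chain
  have hconeP : cone C P = Function.update (cone C i) 0 (v C i) := by
    rw [cone_step C P hP0, hPp, hPlab]
  have cP0 : cone C P 0 = v C i := by rw [hconeP]; simp
  have cP1 : cone C P 1 = cone C i 1 := by rw [hconeP, Function.update_of_ne (by decide)]
  have cP2 : cone C P 2 = cone C i 2 := by rw [hconeP, Function.update_of_ne (by decide)]
  have hconeQ1 : cone C (Q 1) = Function.update (cone C P) 1 (v C P) := by
    rw [cone_step C (Q 1) hQ10, hQ1p, hQ1lab]
  have cQ10 : cone C (Q 1) 0 = v C i := by
    rw [hconeQ1, Function.update_of_ne (by decide), cP0]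
  have cQ11 : cone C (Q 1) 1 = v C P := by rw [hconeQ1]; simp
  have cQ12 : cone C (Q 1) 2 = cone C i 2 := by
    rw [hconeQ1, Function.update_of_ne (by decide), cP2]
  -- membership bookkeeping for the proximity set
  have h1mem : 1 ∈ Finset.Icc 1 (mm - 1) := by rw [Finset.mem_Icc]; omega
  have hPnotin : P ∉ (Finset.Icc 1 (mm - 1)).image Q := by
    intro h
    obtain ⟨s, hs, he⟩ := Finset.mem_image.mp h
    rw [Finset.mem_Icc] at hs
    have := hPQ s hs.1 hs.2
    rw [he] at this
    omega
  have hPmem : P ∈ A.proxSet i := by rw [hprox]; exact Finset.mem_insert_self P _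
  have hQmem : ∀ s, 1 ≤ s → s ≤ mm - 1 → Q s ∈ A.proxSet i := by
    intro s h1 h2
    rw [hprox]
    exact Finset.mem_insert_of_mem (Finset.mem_image.mpr ⟨s, Finset.mem_Icc.mpr ⟨h1, h2⟩, rfl⟩)
  have hQiinj : ∀ s ∈ Finset.Icc 1 (mm-1), ∀ t ∈ Finset.Icc 1 (mm-1), Q s = Q t → s = t := by
    intro s hs t ht he
    rw [Finset.mem_Icc] at hs ht
    by_contra hne
    rcases Nat.lt_or_ge s t with h | h
    · have := hQmono s t hs.1 h ht.2; rw [he] at this; omega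
    · have hlt : t < s := by omega
      have := hQmono t s ht.1 hlt hs.2; rw [he] at this; omega
  -- the characterization of nodes linearly proximate to i
  have keyChain : ∀ n, ∀ k : Fin r, ∀ a b : Fin 3, a ≠ b → (k:ℕ) ≤ n →
      inChain C i a b k = true → (k = P ∧ a = 0) ∨ (k = Q 1 ∧ a = 0 ∧ b = 1) := by
    intro n
    induction n with
    | zero =>
      intro k a b hab hk hin
      have h1 := inChain_lt C hin
      omega
    | succ n ih =>
      intro k a b hab hk hin
      obtain ⟨hk0, hcases⟩ := inChain_elim C hin
      rcases hcases with ⟨hp, hl⟩ | ⟨hl, hin'⟩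
      · left
        have hkP : k = P := hchild_eq k ⟨hk0, hp⟩
        subst hkP
        exact ⟨rfl, by rw [← hl, hPlab]⟩
      · have hparlt := C.parent_lt k hk0
        have hpar := ih (C.parent k) a b hab (by omega) hin'
        rcases hpar with ⟨hpP, ha⟩ | ⟨hpQ, ha, hb⟩
        · -- parent k = P, a = 0, label k = b
          subst ha
          have hb12 : b = 1 ∨ b = 2 := by
            have h1 : (b : ℕ) < 3 := b.isLt
            have h2 : (b : ℕ) ≠ 0 := by
              intro hh
              exact hab (Fin.ext (by simp [hh])).symm
            rcases Nat.lt_or_ge (b : ℕ) 2 with h | h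
            · left; exact Fin.ext (by omega)
            · right; exact Fin.ext (by omega)
          have hkPlt : (P : ℕ) < (k : ℕ) := by rw [← hpP]; exact hparlt
          rcases hb12 with rfl | rfl
          · right
            refine ⟨?_, rfl, rfl⟩
            by_contra hne
            exact (C.label_distinct k (Q 1) hk0 hQ10 hne (by rw [hpP, hQ1p]))
              (by rw [hl, hQ1lab])
          · exfalso
            -- k is a label-2 child of P: it would be proximate to i
            have hconek : cone C k = Function.update (cone C P) 2 (v C P) := by
              rw [cone_step C k hk0, hpP, hl]
            have hk0' : cone C k 0 = v C i := by
              rw [hconek, Function.update_of_ne (by decide), cP0]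
            have hprx : Prox C k i := by
              refine ⟨?_, 0, hk0'⟩
              intro hh
              have : (k : ℕ) = (i : ℕ) := by rw [hh]
              omega
            have hmem : k ∈ A.proxSet i := Finset.mem_filter.mpr ⟨Finset.mem_univ k, hprx⟩
            rw [hprox] at hmem
            rcases Finset.mem_insert.mp hmem with heq | hmem'
            · rw [heq] at hkPlt; omega
            · obtain ⟨s, hs, hQs_eq⟩ := Finset.mem_image.mp hmem'
              rw [Finset.mem_Icc] at hs
              rcases Nat.eq_or_lt_of_le hs.1 with h1 | h1
              · -- s = 1 : label mismatch
                rw [← h1] at hQs_eq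
                rw [hQs_eq, hl] at hQ1lab
                exact absurd hQ1lab (by decide)
              · -- s ≥ 2: parent mismatch
                have hpp := hQparent s h1 hs.2
                rw [hQs_eq, hpP] at hpp
                have := hPQ (s-1) (by omega) (by omega)
                rw [← hpp] at this
                omega
        · -- parent k = Q 1, a = 0, b = 1, label k = 1
          exfalso
          subst ha hb
          have hkQ1lt : (Q 1 : ℕ) < (k : ℕ) := by rw [← hpQ]; exact hparlt
          have hconek : cone C k = Function.update (cone C (Q 1)) 1 (v C (Q 1)) := by
            rw [cone_step C k hk0, hpQ, hl]
          have hk0' : cone C k 0 = v C i := by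
            rw [hconek, Function.update_of_ne (by decide), cQ10]
          have hprx : Prox C k i := by
            refine ⟨?_, 0, hk0'⟩
            intro hh
            have : (k : ℕ) = (i : ℕ) := by rw [hh]
            omega
          have hmem : k ∈ A.proxSet i := Finset.mem_filter.mpr ⟨Finset.mem_univ k, hprx⟩
          rw [hprox] at hmem
          rcases Finset.mem_insert.mp hmem with heq | hmem'
          · rw [heq] at hkQ1lt
            have := hPQ1
            omega
          · obtain ⟨s, hs, hQs_eq⟩ := Finset.mem_image.mp hmem'
            rw [Finset.mem_Icc] at hs
            rcases Nat.eq_or_lt_of_le hs.1 with h1 | h1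
            · -- s = 1 : k = Q 1 but parent k = Q 1
              rw [← h1] at hQs_eq
              rw [hQs_eq] at hkQ1lt
              omega
            · -- s ≥ 2: label Q s = 2 ≠ 1
              have hll := hQlab s h1 hs.2
              rw [hQs_eq, hl] at hll
              exact absurd hll (by decide)
  have keyLP : ∀ k, LinProx C k i → k = P ∨ k = Q 1 := by
    intro k ⟨a, b, hab, hin⟩
    rcases keyChain (k : ℕ) k a b hab (le_refl _) hin with ⟨h, _⟩ | ⟨h, _⟩
    · exact Or.inl h
    · exact Or.inr h
  have hLPP : LinProx C P i := ⟨0, 1, by decide, inChain_child C hP0 hPp hPlab⟩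
  have hLPQ1 : LinProx C (Q 1) i :=
    ⟨0, 1, by decide, inChain_extend C hQ10 hQ1lab (by rw [hQ1p]; exact inChain_child C hP0 hPp hPlab)⟩
  -- chains below P
  have hchainP : ∀ s, 1 ≤ s → s ≤ mm - 1 → inChain C P 1 2 (Q s) = true := by
    intro s h1 h2
    induction s with
    | zero => omega
    | succ u ihu =>
      rcases Nat.eq_or_lt_of_le h1 with h | h
      · rw [← h]
        exact inChain_child C hQ10 hQ1p hQ1lab
      · have hu : 1 ≤ u := by omega
        have := ihu hu (by omega)
        refine inChain_extend C (hQ0 (u+1) (by omega) h2) (hQlab (u+1) (by omega) h2) ?_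
        rw [hQparent (u+1) (by omega) h2]
        simpa using this
  have hLPQP : ∀ s, 1 ≤ s → s ≤ mm - 1 → LinProx C (Q s) P := by
    intro s h1 h2
    exact ⟨1, 2, by decide, hchainP s h1 h2⟩
  -- the filter for j = P in the second sum
  have hfiltP : (A.proxSet i).filter (fun k => LinProx C k P) = (Finset.Icc 1 (mm-1)).image Q := by
    ext k
    constructor
    · intro hk
      obtain ⟨hk1, hk2⟩ := Finset.mem_filter.mp hk
      rw [hprox] at hk1
      rcases Finset.mem_insert.mp hk1 with heq | hmem
      · exfalso
        obtain ⟨a, b, hab, hin⟩ := hk2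
        have := inChain_lt C hin
        rw [heq] at this
        omega
      · exact hmem
    · intro hk
      obtain ⟨s, hs, he⟩ := Finset.mem_image.mp hk
      rw [Finset.mem_Icc] at hs
      refine Finset.mem_filter.mpr ⟨by rw [← he]; exact hQmem s hs.1 hs.2, ?_⟩
      rw [← he]
      exact hLPQP s hs.1 hs.2
  -- the filter for j = Q s in the second sum
  have keyQ : ∀ s, 1 ≤ s → s ≤ mm - 1 → ∀ t, 1 ≤ t → t ≤ mm - 1 → ∀ a b : Fin 3, a ≠ b →
      inChain C (Q s) a b (Q t) = true → t = s + 1 := by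
    intro s hs1 hs2 t
    induction t using Nat.strong_induction_on with
    | _ t iht =>
      intro ht1 ht2 a b hab hin
      have hlt := inChain_lt C hin
      have hts : s < t := by
        by_contra hh
        push_neg at hh
        rcases Nat.eq_or_lt_of_le hh with h | h
        · rw [h] at hlt; omega
        · have := hQmono t s ht1 h hs2; omega
      obtain ⟨hk0, hd⟩ := inChain_elim C hin
      rcases hd with ⟨hp, hl⟩ | ⟨hl, hin'⟩
      · -- parent (Q t) = Q s directly
        have ht2' : 2 ≤ t := by omega
        have hpp := hQparent t ht2' ht2
        rw [hpp] at hp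
        by_contra hne
        have htm1 : s < t - 1 := by omega
        have := hQmono s (t-1) hs1 htm1 (by omega)
        rw [hp] at this
        omega
      · -- the chain goes through the parent of Q t
        rcases Nat.eq_or_lt_of_le (Nat.succ_le_of_lt hts) with h | h
        · omega
        · exfalso
          have ht2' : 2 ≤ t := by omega
          have hpp := hQparent t ht2' ht2
          rw [hpp] at hin'
          have hihm := iht (t-1) (by omega) (by omega) (by omega) a b hab hin'
          -- t - 1 = s + 1, so the chain contains Q (s+1) with label b = 2
          have hbl : b = 2 := by rw [← hl]; exact (hQlab t ht2' ht2).symm ▸ rfl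
          have hin2 : inChain C (Q s) a b (Q (s+1)) = true := by
            have : t - 1 = s + 1 := hihm
            rw [← this]
            exact hin'
          obtain ⟨hq0, hd2⟩ := inChain_elim C hin2
          have hs2' : s + 1 ≤ mm - 1 := by omega
          rcases hd2 with ⟨hp2, hl2⟩ | ⟨hl2, hin3⟩
          · have := hQlab (s+1) (by omega) hs2'
            rw [hl2] at this
            rw [← this] at hbl
            exact hab (hbl ▸ rfl)
          · have hpp2 := hQparent (s+1) (by omega) hs2'
            have hss : s + 1 - 1 = s := by omega
            rw [hpp2, hss] at hin3
            have := inChain_lt C hin3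
            omega
  have hfiltQ : ∀ s, 1 ≤ s → s ≤ mm - 1 →
      (A.proxSet i).filter (fun k => LinProx C k (Q s))
        = if s ≤ mm - 2 then {Q (s+1)} else ∅ := by
    intro s hs1 hs2
    ext k
    simp only [Finset.mem_filter]
    constructor
    · intro ⟨hk1, hk2⟩
      obtain ⟨a, b, hab, hin⟩ := hk2
      rw [hprox] at hk1
      rcases Finset.mem_insert.mp hk1 with heq | hmem
      · exfalso
        have := inChain_lt C hin
        have := hPQ s hs1 hs2
        rw [heq] at *
        omega
      · obtain ⟨t, ht, he⟩ := Finset.mem_image.mp hmem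
        rw [Finset.mem_Icc] at ht
        rw [← he] at hin
        have := keyQ s hs1 hs2 t ht.1 ht.2 a b hab hin
        subst this
        have hsm : s + 1 ≤ mm - 1 := ht.2
        rw [if_pos (by omega)]
        rw [← he]
        exact Finset.mem_singleton_self _
    · intro hk
      by_cases hsm : s ≤ mm - 2
      · rw [if_pos hsm] at hk
        have hke := Finset.mem_singleton.mp hk
        subst hke
        refine ⟨hQmem (s+1) (by omega) (by omega), ?_⟩
        obtain ⟨⟨h0, hp⟩, hlab⟩ := hQs s hs1 hsm
        exact ⟨2, 0, by decide, inChain_child C h0 hp hlab⟩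
      · rw [if_neg hsm] at hk
        exact absurd hk (Finset.notMem_empty k)
  -- sums over the proximity set
  have hcard : (Finset.Icc 1 (mm-1)).card = mm - 1 := by
    rw [Nat.card_Icc]
    omega
  have hsum1 : ∑ j ∈ A.proxSet i, A.m j * (A.m j - 1) = ((mm:ℤ)-1) * ((mm:ℤ)-2) := by
    rw [hprox, Finset.sum_insert hPnotin, Finset.sum_image hQiinj, hmP]
    have hz : ∀ s ∈ Finset.Icc 1 (mm-1), A.m (Q s) * (A.m (Q s) - 1) = 0 := by
      intro s hs
      rw [Finset.mem_Icc] at hs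
      rw [hWQ s hs.1 hs.2]
      ring
    rw [Finset.sum_congr rfl hz, Finset.sum_const_zero]
    ring
  have hinnerP : ∑ k ∈ (A.proxSet i).filter (fun k => LinProx C k P), A.m k = (mm:ℤ) - 1 := by
    rw [hfiltP, Finset.sum_image hQiinj]
    have hz : ∀ s ∈ Finset.Icc 1 (mm-1), A.m (Q s) = 1 := by
      intro s hs
      rw [Finset.mem_Icc] at hs
      exact hWQ s hs.1 hs.2
    rw [Finset.sum_congr rfl hz, Finset.sum_const, hcard]
    simp
    omega
  have hinnerQ : ∀ s, 1 ≤ s → s ≤ mm - 1 →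
      ∑ k ∈ (A.proxSet i).filter (fun k => LinProx C k (Q s)), A.m k
        = if s ≤ mm - 2 then 1 else 0 := by
    intro s hs1 hs2
    rw [hfiltQ s hs1 hs2]
    by_cases hsm : s ≤ mm - 2
    · rw [if_pos hsm, if_pos hsm, Finset.sum_singleton]
      exact hWQ (s+1) (by omega) (by omega)
    · rw [if_neg hsm, if_neg hsm, Finset.sum_empty]
  have hsum2 : ∑ j ∈ A.proxSet i,
      (A.m j - ∑ k ∈ (A.proxSet i).filter (fun k => LinProx C k j), A.m k) = 1 := by
    nth_rewrite 1 [hprox]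
    rw [Finset.sum_insert hPnotin, Finset.sum_image hQiinj]
    rw [hinnerP, hmP]
    have hterm : ∀ s ∈ Finset.Icc 1 (mm-1),
        (A.m (Q s) - ∑ k ∈ (A.proxSet i).filter (fun k => LinProx C k (Q s)), A.m k)
          = if s = mm - 1 then 1 else 0 := by
      intro s hs
      rw [Finset.mem_Icc] at hs
      rw [hWQ s hs.1 hs.2, hinnerQ s hs.1 hs.2]
      by_cases hsm : s ≤ mm - 2
      · rw [if_pos hsm, if_neg (by omega)]
        ring
      · rw [if_neg hsm, if_pos (by omega)]
        ring
    rw [Finset.sum_congr rfl hterm, Finset.sum_ite_eq' (Finset.Icc 1 (mm-1)) (mm-1) (fun _ => (1:ℤ))]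
    rw [if_pos (Finset.mem_Icc.mpr ⟨by omega, le_refl _⟩)]
    ring
  have fin3 : ∀ c : Fin 3, c = 0 ∨ c = 1 ∨ c = 2 := by decide
  have hne_iP : i ≠ P := fun h => by
    have : (i:ℕ) = (P:ℕ) := congrArg Fin.val h
    omega
  have hPQ1ne : P ≠ Q 1 := fun h => by
    have : (P:ℕ) = (Q 1:ℕ) := congrArg Fin.val h
    omega
  have hmQ1 : A.m (Q 1) = 1 := hWQ 1 (le_refl 1) (by omega)
  -- final case analysis on the set of labels under i
  rcases hS with hSa | hSb
  · -- labels under i = {2} (paper label 3)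
    have hl2 : C.label i = 2 := by
      have h1 : C.label i ∈ labelsUnder C i := by
        rw [labelsUnder_step C i hi0]
        exact Finset.mem_insert_self _ _
      rw [hSa] at h1
      exact Finset.mem_singleton.mp h1
    have hcone2i : cone C i 2 = v C (C.parent i) := by
      rw [cone_step C i hi0, hl2, Function.update_self]
    have hcone0i : cone C i 0 = Pi.single 0 1 :=
      cone_of_not_label C i 0 (by rw [hSa]; decide)
    have hcone1i : cone C i 1 = Pi.single 1 1 :=
      cone_of_not_label C i 1 (by rw [hSa]; decide)
    have hpii : (C.parent i : ℕ) < (i : ℕ) := C.parent_lt i hi0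
    have hProxipi : Prox C i (C.parent i) := by
      refine ⟨?_, 2, hcone2i⟩
      intro h
      have : (i:ℕ) = (C.parent i:ℕ) := congrArg Fin.val h
      omega
    have hProxPpi : Prox C P (C.parent i) := by
      refine ⟨?_, 2, by rw [cP2, hcone2i]⟩
      intro h
      have : (P:ℕ) = (C.parent i:ℕ) := congrArg Fin.val h
      omega
    have hProxQ1pi : Prox C (Q 1) (C.parent i) := by
      refine ⟨?_, 2, by rw [cQ12, hcone2i]⟩
      intro h
      have : (Q 1:ℕ) = (C.parent i:ℕ) := congrArg Fin.val h
      omega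
    have hBset : A.Bset i = {C.parent i} := by
      ext j
      simp only [ToricCluster.Bset, Finset.mem_filter, Finset.mem_univ, true_and,
        Finset.mem_singleton]
      constructor
      · rintro ⟨hne, c, hc⟩
        rcases fin3 c with rfl | rfl | rfl
        · rw [hcone0i] at hc
          exact absurd hc (single_ne_v C 0 j)
        · rw [hcone1i] at hc
          exact absurd hc (single_ne_v C 1 j)
        · rw [hcone2i] at hc
          exact (v_injective C hc).symm
      · intro h
        subst h
        exact hProxipi
    have hfilt3 : (A.proxSet (C.parent i)).filter (fun k => LinProx C k i) = {P, Q 1} := by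
      ext k
      simp only [Finset.mem_filter, Finset.mem_univ, true_and, Finset.mem_insert,
        Finset.mem_singleton, ToricCluster.proxSet]
      constructor
      · rintro ⟨hk1, hk2⟩
        exact keyLP k hk2
      · rintro (rfl | rfl)
        · exact ⟨hProxPpi, hLPP⟩
        · exact ⟨hProxQ1pi, hLPQ1⟩
    have hsum3 : ∑ j ∈ A.Bset i,
        (A.m i - ∑ k ∈ (A.proxSet j).filter (fun k => LinProx C k i), A.m k) = 0 := by
      rw [hBset, Finset.sum_singleton, hfilt3, Finset.sum_pair hPQ1ne, hmP, hmQ1, hmi]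
      ring
    have hAset : A.Aset i = ∅ := by
      refine Finset.eq_empty_iff_forall_notMem.mpr fun k hk => ?_
      rw [ToricCluster.Aset, Finset.mem_filter] at hk
      obtain ⟨-, hchildk, hnot⟩ := hk
      have hkP := hchild_eq k hchildk
      subst hkP
      exact hnot ⟨C.parent i, hProxipi, hProxPpi⟩
    have hBcard : (A.Bset i).card = 1 := by rw [hBset, Finset.card_singleton]
    have hAcard : (A.Aset i).card = 0 := by rw [hAset, Finset.card_empty]
    rw [ToricCluster.chi, ← hCdef, hsum1, hsum2, hsum3, hBcard, hAcard, hmi]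
    norm_num
    ring
  · -- labels under i = {1, 2} (paper labels {2,3})
    obtain ⟨a1, ha1lt, hcone1i⟩ := cone_of_label C i 1 (by rw [hSb]; decide)
    obtain ⟨a2, ha2lt, hcone2i⟩ := cone_of_label C i 2 (by rw [hSb]; decide)
    have hcone0i : cone C i 0 = Pi.single 0 1 :=
      cone_of_not_label C i 0 (by rw [hSb]; decide)
    have hne12 : a1 ≠ a2 := by
      intro h
      refine cone_pairwise_ne C i (show (1:Fin 3) ≠ 2 by decide) ?_
      rw [hcone1i, hcone2i, h]
    have hProxia1 : Prox C i a1 := by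
      refine ⟨?_, 1, hcone1i⟩
      intro h
      have : (i:ℕ) = (a1:ℕ) := congrArg Fin.val h
      omega
    have hProxia2 : Prox C i a2 := by
      refine ⟨?_, 2, hcone2i⟩
      intro h
      have : (i:ℕ) = (a2:ℕ) := congrArg Fin.val h
      omega
    have hProxPa1 : Prox C P a1 := by
      refine ⟨?_, 1, by rw [cP1, hcone1i]⟩
      intro h
      have : (P:ℕ) = (a1:ℕ) := congrArg Fin.val h
      omega
    have hProxPa2 : Prox C P a2 := by
      refine ⟨?_, 2, by rw [cP2, hcone2i]⟩
      intro h
      have : (P:ℕ) = (a2:ℕ) := congrArg Fin.val h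
      omega
    have hProxQ1a2 : Prox C (Q 1) a2 := by
      refine ⟨?_, 2, by rw [cQ12, hcone2i]⟩
      intro h
      have : (Q 1:ℕ) = (a2:ℕ) := congrArg Fin.val h
      omega
    have hnotQ1a1 : ¬ Prox C (Q 1) a1 := by
      rintro ⟨hne, c, hc⟩
      rcases fin3 c with rfl | rfl | rfl
      · rw [cQ10] at hc
        have := v_injective C hc
        subst this
        omega
      · rw [cQ11] at hc
        have := v_injective C hc
        subst this
        omega
      · rw [cQ12, hcone2i] at hc
        exact hne12 (v_injective C hc).symm
    have hBset : A.Bset i = {a1, a2} := by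
      ext j
      simp only [ToricCluster.Bset, Finset.mem_filter, Finset.mem_univ, true_and,
        Finset.mem_insert, Finset.mem_singleton]
      constructor
      · rintro ⟨hne, c, hc⟩
        rcases fin3 c with rfl | rfl | rfl
        · rw [hcone0i] at hc
          exact absurd hc (single_ne_v C 0 j)
        · rw [hcone1i] at hc
          exact Or.inl (v_injective C hc).symm
        · rw [hcone2i] at hc
          exact Or.inr (v_injective C hc).symm
      · rintro (rfl | rfl)
        · exact hProxia1
        · exact hProxia2
    have hfilt3a1 : (A.proxSet a1).filter (fun k => LinProx C k i) = {P} := by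
      ext k
      simp only [Finset.mem_filter, Finset.mem_univ, true_and, Finset.mem_singleton,
        ToricCluster.proxSet]
      constructor
      · rintro ⟨hk1, hk2⟩
        rcases keyLP k hk2 with rfl | rfl
        · rfl
        · exact absurd hk1 hnotQ1a1
      · rintro rfl
        exact ⟨hProxPa1, hLPP⟩
    have hfilt3a2 : (A.proxSet a2).filter (fun k => LinProx C k i) = {P, Q 1} := by
      ext k
      simp only [Finset.mem_filter, Finset.mem_univ, true_and, Finset.mem_insert,
        Finset.mem_singleton, ToricCluster.proxSet]
      constructor
      · rintro ⟨hk1, hk2⟩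
        exact keyLP k hk2
      · rintro (rfl | rfl)
        · exact ⟨hProxPa2, hLPP⟩
        · exact ⟨hProxQ1a2, hLPQ1⟩
    have hsum3 : ∑ j ∈ A.Bset i,
        (A.m i - ∑ k ∈ (A.proxSet j).filter (fun k => LinProx C k i), A.m k) = 1 := by
      rw [hBset, Finset.sum_pair hne12, hfilt3a1, hfilt3a2, Finset.sum_singleton,
        Finset.sum_pair hPQ1ne, hmP, hmQ1, hmi]
      ring
    have hAset : A.Aset i = ∅ := by
      refine Finset.eq_empty_iff_forall_notMem.mpr fun k hk => ?_
      rw [ToricCluster.Aset, Finset.mem_filter] at hk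
      obtain ⟨-, hchildk, hnot⟩ := hk
      have hkP := hchild_eq k hchildk
      subst hkP
      exact hnot ⟨a2, hProxia2, hProxPa2⟩
    have hBcard : (A.Bset i).card = 2 := by
      rw [hBset, Finset.card_insert_of_notMem (by simp [hne12]), Finset.card_singleton]
    have hAcard : (A.Aset i).card = 0 := by rw [hAset, Finset.card_empty]
    rw [ToricCluster.chi, ← hCdef, hsum1, hsum2, hsum3, hBcard, hAcard, hmi]
    norm_num
    ring
end

section
/- Let A=(C,m) be a 3-dimensional toric idealistic cluster, let Q_t be a node and let c ∈ {1,2,3} be a label that does not belong to S_t (the set of labels under Q_t). Let Q_t, Q_{t+1}, …, Q_l be nodes of C such that Q_{s+1} is the child of Q_s along the edge labelled c for all t ≤ s ≤ l−1, and suppose m_t = m_{t+1} = ⋯ = m_l. Then for every t ≤ i ≤ l one has ν_i = (i−t+1)·ν_t − (i−t) and N_i = (i−t+1)·N_t. Consequently: (1) every positive integer b dividing N_t divides N_i for all t ≤ i ≤ l; and (2) if l > t and ν_l/N_l = c'/d' with c', d' coprime positive integers, then d' does not divide N_t. -/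
open Finset

open ToricConstellation ToricCluster


/-! ### Auxiliary lemmas -/

namespace ToricConstellation

variable {r : ℕ}

/-- Strong induction on the index of a node. -/
lemma fin_strong_induction {P : Fin r → Prop}
    (H : ∀ i : Fin r, (∀ j : Fin r, (j : ℕ) < (i : ℕ) → P j) → P i) (i : Fin r) : P i := by
  obtain ⟨n, hn⟩ : ∃ n, (i : ℕ) = n := ⟨_, rfl⟩
  induction n using Nat.strong_induction_on generalizing i with
  | _ n IH => exact H i (fun j hj => IH _ (hn ▸ hj) j rfl)

lemma cone_eq_root (C : ToricConstellation r) (i : Fin r) (h : ¬ 0 < (i : ℕ)) :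
    C.cone i = fun a => Pi.single a 1 := by
  rw [cone, dif_neg h]

lemma cone_eq_child (C : ToricConstellation r) (i : Fin r) (h : 0 < (i : ℕ)) :
    C.cone i = Function.update (C.cone (C.parent i)) (C.label i) (C.v (C.parent i)) := by
  rw [cone, dif_pos h]; rfl

/-- Sum of the coordinates of a vector. -/
def sn (x : Fin 3 → ℤ) : ℤ := ∑ b, x b

lemma sn_single (b : Fin 3) : sn (Pi.single b 1) = 1 := by
  fin_cases b <;> simp [sn, Fin.sum_univ_three, Pi.single_apply]

lemma sn_v (C : ToricConstellation r) (i : Fin r) : sn (C.v i) = ∑ a, sn (C.cone i a) := by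
  simp only [sn, v, Finset.sum_apply]
  rw [Finset.sum_comm]

lemma sn_cone_pos (C : ToricConstellation r) (i : Fin r) : ∀ a : Fin 3,
    0 < sn (C.cone i a) := by
  induction i using fin_strong_induction with
  | H i IH =>
    intro a
    by_cases h : 0 < (i : ℕ)
    · rw [cone_eq_child C i h]
      rcases eq_or_ne a (C.label i) with rfl | hne
      · rw [Function.update_self, sn_v]
        have h1 := IH (C.parent i) (C.parent_lt i h) 0
        have h2 := IH (C.parent i) (C.parent_lt i h) 1
        have h3 := IH (C.parent i) (C.parent_lt i h) 2
        rw [Fin.sum_univ_three]; omega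
      · rw [Function.update_of_ne hne]
        exact IH (C.parent i) (C.parent_lt i h) a
    · rw [cone_eq_root C i h, sn_single]; norm_num

lemma three_le_sn_v (C : ToricConstellation r) (i : Fin r) : 3 ≤ sn (C.v i) := by
  rw [sn_v, Fin.sum_univ_three]
  have h1 := sn_cone_pos C i 0
  have h2 := sn_cone_pos C i 1
  have h3 := sn_cone_pos C i 2
  omega

lemma v_ne_single (C : ToricConstellation r) (i : Fin r) (b : Fin 3) :
    C.v i ≠ Pi.single b 1 := by
  intro h
  have := three_le_sn_v C i
  rw [h, sn_single] at this
  omega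


lemma erase_sum_ge_two (c0 : Fin 3) (f : Fin 3 → ℤ) (hf : ∀ a, 0 < f a) :
    2 ≤ ∑ a ∈ Finset.univ.erase c0, f a := by
  have hcard : (Finset.univ.erase c0).card = 2 := by
    rw [Finset.card_erase_of_mem (Finset.mem_univ _)]; simp
  calc (2:ℤ) = (Finset.univ.erase c0).card • (1:ℤ) := by rw [hcard]; simp
  _ ≤ _ := Finset.card_nsmul_le_sum _ _ _ (fun a _ => hf a)

lemma sn_cone_lt_sn_v (C : ToricConstellation r) (i : Fin r) (a : Fin 3) :
    sn (C.cone i a) < sn (C.v i) := by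
  rw [sn_v, ← Finset.add_sum_erase _ _ (Finset.mem_univ a)]
  have h2 : 2 ≤ ∑ x ∈ Finset.univ.erase a, sn (C.cone i x) :=
    erase_sum_ge_two a _ (sn_cone_pos C i)
  omega

lemma v_ne_cone_self (C : ToricConstellation r) (i : Fin r) (a : Fin 3) :
    C.cone i a ≠ C.v i := by
  intro h
  have := sn_cone_lt_sn_v C i a
  rw [h] at this
  omega

lemma sn_v_child (C : ToricConstellation r) (j : Fin r) (h : 0 < (j : ℕ)) :
    sn (C.v (C.parent j)) < sn (C.v j) := by
  rw [sn_v C j, cone_eq_child C j h,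
    ← Finset.add_sum_erase _ _ (Finset.mem_univ (C.label j)), Function.update_self]
  have h2 : 2 ≤ ∑ a ∈ Finset.univ.erase (C.label j),
      sn (Function.update (C.cone (C.parent j)) (C.label j) (C.v (C.parent j)) a) := by
    refine erase_sum_ge_two (C.label j) _ (fun a => ?_)
    rcases eq_or_ne a (C.label j) with rfl | hne
    · rw [Function.update_self]
      have := three_le_sn_v C (C.parent j); omega
    · rw [Function.update_of_ne hne]
      exact sn_cone_pos C _ a
  omega

lemma anc_iff (C : ToricConstellation r) (i j : Fin r) :
    C.anc i j = true ↔ i = j ∨ (0 < (j : ℕ) ∧ C.anc i (C.parent j) = true) := by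
  rw [anc]
  by_cases h : 0 < (j : ℕ) <;> simp [h]

lemma anc_self (C : ToricConstellation r) (i : Fin r) : C.anc i i = true := by
  rw [anc_iff]; exact Or.inl rfl

lemma anc_sn_lt (C : ToricConstellation r) :
    ∀ j i : Fin r, C.anc i j = true → i ≠ j → sn (C.v i) < sn (C.v j) := by
  intro j
  induction j using fin_strong_induction with
  | H j IH =>
    intro i h hne
    rw [anc_iff] at h
    rcases h with rfl | ⟨hj, hp⟩
    · exact absurd rfl hne
    · have hstep := sn_v_child C j hj
      rcases eq_or_ne i (C.parent j) with rfl | hne2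
      · exact hstep
      · exact lt_trans (IH _ (C.parent_lt j hj) i hp hne2) hstep

lemma anc_root_s9 (C : ToricConstellation r) (i : Fin r) (h : ¬ 0 < (i : ℕ)) (j : Fin r) :
    C.anc i j = true := by
  induction j using fin_strong_induction with
  | H j IH =>
    rw [anc_iff]
    by_cases hj : 0 < (j : ℕ)
    · exact Or.inr ⟨hj, IH _ (C.parent_lt j hj)⟩
    · exact Or.inl (Fin.ext (by omega))

lemma exists_child_anc (C : ToricConstellation r) :
    ∀ i : Fin r, ∀ p : Fin r, C.anc p i = true → p ≠ i →
    ∃ k, C.IsChild k p ∧ C.anc k i = true := by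
  intro i
  induction i using fin_strong_induction with
  | H i IH =>
    intro p h hne
    rw [anc_iff] at h
    rcases h with rfl | ⟨hi, hp⟩
    · exact absurd rfl hne
    rcases eq_or_ne (C.parent i) p with hpi | hpi
    · exact ⟨i, ⟨hi, hpi⟩, anc_self C i⟩
    · obtain ⟨k, hk, hanc⟩ := IH (C.parent i) (C.parent_lt i hi) p hp (Ne.symm hpi)
      exact ⟨k, hk, by rw [anc_iff]; exact Or.inr ⟨hi, hanc⟩⟩

/-- A point with positive coordinates in the basis `cone C i`. -/
def PosIn (C : ToricConstellation r) (i : Fin r) (x : Fin 3 → ℤ) : Prop :=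
  ∃ lam : Fin 3 → ℤ, (∀ a, 0 < lam a) ∧ ∀ b, x b = ∑ a, lam a * C.cone i a b

/-- Coordinate change from a child's basis to the parent's basis. -/
def lamUp (c0 : Fin 3) (lam : Fin 3 → ℤ) : Fin 3 → ℤ :=
  Function.update (fun a => lam c0 + lam a) c0 (lam c0)

lemma lamUp_pos (c0 : Fin 3) (lam : Fin 3 → ℤ) (h : ∀ a, 0 < lam a) :
    ∀ a, 0 < lamUp c0 lam a := by
  intro a
  rcases eq_or_ne a c0 with rfl | hne
  · rw [lamUp, Function.update_self]; exact h a
  · rw [lamUp, Function.update_of_ne hne]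
    have := h c0; have := h a; omega

lemma lamUp_inj (c0 : Fin 3) (lam mu : Fin 3 → ℤ) (h : lamUp c0 lam = lamUp c0 mu) :
    lam = mu := by
  funext a
  have hc := congrFun h c0
  rw [lamUp, lamUp, Function.update_self, Function.update_self] at hc
  rcases eq_or_ne a c0 with rfl | hne
  · exact hc
  · have ha := congrFun h a
    rw [lamUp, lamUp, Function.update_of_ne hne, Function.update_of_ne hne] at ha
    omega

lemma coords_up (u : Fin 3 → Fin 3 → ℤ) (w : Fin 3 → ℤ) (hw : ∀ t, w t = ∑ a', u a' t)
    (c0 : Fin 3) (lam : Fin 3 → ℤ) (b : Fin 3) :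
    ∑ a, lam a * (Function.update u c0 w) a b = ∑ a, lamUp c0 lam a * u a b := by
  fin_cases c0 <;> simp [lamUp, Fin.sum_univ_three, Function.update, hw] <;> ring

lemma v_apply (C : ToricConstellation r) (i : Fin r) (t : Fin 3) :
    C.v i t = ∑ a', C.cone i a' t := by
  simp [v, Finset.sum_apply]

lemma coords_inj (C : ToricConstellation r) :
    ∀ i : Fin r, ∀ lam mu : Fin 3 → ℤ,
    (∀ b, ∑ a, lam a * C.cone i a b = ∑ a, mu a * C.cone i a b) → lam = mu := by
  intro i
  induction i using fin_strong_induction with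
  | H i IH =>
    intro lam mu hb
    by_cases h : 0 < (i : ℕ)
    · rw [cone_eq_child C i h] at hb
      refine lamUp_inj (C.label i) lam mu
        (IH (C.parent i) (C.parent_lt i h) _ _ (fun b => ?_))
      rw [← coords_up _ _ (v_apply C (C.parent i)), ← coords_up _ _ (v_apply C (C.parent i))]
      exact hb b
    · funext b
      have hb' := hb b
      rw [cone_eq_root C i h] at hb'
      simpa [Pi.single_apply, mul_ite, Finset.sum_ite_eq] using hb'

lemma posIn_v (C : ToricConstellation r) (i : Fin r) : PosIn C i (C.v i) :=
  ⟨fun _ => 1, fun _ => one_pos, fun b => by simp [v_apply]⟩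

lemma posIn_parent (C : ToricConstellation r) {j i : Fin r} {x : Fin 3 → ℤ}
    (hj : C.IsChild j i) (h : PosIn C j x) : PosIn C i x := by
  obtain ⟨lam, hpos, hx⟩ := h
  refine ⟨lamUp (C.label j) lam, lamUp_pos _ _ hpos, fun b => ?_⟩
  rw [← coords_up (C.cone i) _ (v_apply C i), ← hj.2]
  rw [← cone_eq_child C j hj.1]
  exact hx b

lemma posIn_of_anc (C : ToricConstellation r) :
    ∀ j i : Fin r, ∀ x : Fin 3 → ℤ, C.anc i j = true → PosIn C j x → PosIn C i x := by
  intro j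
  induction j using fin_strong_induction with
  | H j IH =>
    intro i x h hx
    rw [anc_iff] at h
    rcases h with rfl | ⟨hj, hp⟩
    · exact hx
    · exact IH _ (C.parent_lt j hj) i x hp (posIn_parent C ⟨hj, rfl⟩ hx)

lemma children_disjoint (C : ToricConstellation r) {j k p : Fin r} {x : Fin 3 → ℤ}
    (hj : C.IsChild j p) (hk : C.IsChild k p) (hne : j ≠ k)
    (h1 : PosIn C j x) (h2 : PosIn C k x) : False := by
  have hlab : C.label j ≠ C.label k :=
    C.label_distinct j k hj.1 hk.1 hne (hj.2.trans hk.2.symm)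
  obtain ⟨lam, hlp, hlx⟩ := h1
  obtain ⟨mu, hmp, hmx⟩ := h2
  have e1 : ∀ b, x b = ∑ a, lamUp (C.label j) lam a * C.cone p a b := fun b => by
    rw [← coords_up (C.cone p) _ (v_apply C p), ← hj.2, ← cone_eq_child C j hj.1]
    exact hlx b
  have e2 : ∀ b, x b = ∑ a, lamUp (C.label k) mu a * C.cone p a b := fun b => by
    rw [← coords_up (C.cone p) _ (v_apply C p), ← hk.2, ← cone_eq_child C k hk.1]
    exact hmx b
  have hL : lamUp (C.label j) lam = lamUp (C.label k) mu :=
    coords_inj C p _ _ (fun b => by rw [← e1 b, ← e2 b])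
  have a1 : lamUp (C.label j) lam (C.label j) = lam (C.label j) := Function.update_self _ _ _
  have a2 : lamUp (C.label j) lam (C.label k) = lam (C.label j) + lam (C.label k) :=
    Function.update_of_ne (Ne.symm hlab) _ _
  have b1 : lamUp (C.label k) mu (C.label k) = mu (C.label k) := Function.update_self _ _ _
  have b2 : lamUp (C.label k) mu (C.label j) = mu (C.label k) + mu (C.label j) :=
    Function.update_of_ne hlab _ _
  have c1 := congrFun hL (C.label j)
  have c2 := congrFun hL (C.label k)
  rw [a1, b2] at c1
  rw [a2, b1] at c2
  have := hlp (C.label k); have := hmp (C.label j)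
  omega

lemma posIn_comparable (C : ToricConstellation r) (i j : Fin r) (x : Fin 3 → ℤ)
    (h1 : PosIn C i x) (h2 : PosIn C j x) :
    C.anc i j = true ∨ C.anc j i = true := by
  suffices H : ∀ n, ∀ i j : Fin r, (i : ℕ) + (j : ℕ) ≤ n → ∀ x, PosIn C i x → PosIn C j x →
      C.anc i j = true ∨ C.anc j i = true from H _ i j le_rfl x h1 h2
  intro n
  induction n with
  | zero =>
    intro i j hn x _ _
    left
    have : i = j := Fin.ext (by omega)
    rw [this]; exact anc_self C j
  | succ n IH =>
    intro i j hn x h1 h2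
    by_cases hj : 0 < (j : ℕ)
    · have hlt := C.parent_lt j hj
      have hpj : PosIn C (C.parent j) x := posIn_parent C ⟨hj, rfl⟩ h2
      rcases IH i (C.parent j) (by omega) x h1 hpj with hij | hji
      · left; rw [anc_iff]; exact Or.inr ⟨hj, hij⟩
      · rcases eq_or_ne (C.parent j) i with heq | hne
        · left; rw [anc_iff]; exact Or.inr ⟨hj, heq ▸ anc_self C i⟩
        · obtain ⟨k, hk, hanc⟩ := exists_child_anc C i (C.parent j) hji hne
          rcases eq_or_ne k j with rfl | hkj
          · exact Or.inr hanc
          · exact absurd (children_disjoint C hk ⟨hj, rfl⟩ hkj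
              (posIn_of_anc C i k x hanc h1) h2) not_false
    · right; exact anc_root_s9 C j hj i

lemma v_injective_s9 (C : ToricConstellation r) {i j : Fin r} (h : C.v i = C.v j) : i = j := by
  rcases posIn_comparable C i j (C.v i) (posIn_v C i) (h ▸ posIn_v C j) with hij | hji
  · by_contra hne
    have := anc_sn_lt C j i hij hne
    rw [h] at this; omega
  · by_contra hne
    have := anc_sn_lt C i j hji (Ne.symm hne)
    rw [h] at this; omega

lemma cone_entry_cases (C : ToricConstellation r) :
    ∀ i : Fin r, ∀ a : Fin 3, (∃ b, C.cone i a = Pi.single b 1) ∨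
    ∃ k : Fin r, (k : ℕ) < (i : ℕ) ∧ C.cone i a = C.v k := by
  intro i
  induction i using fin_strong_induction with
  | H i IH =>
    intro a
    by_cases h : 0 < (i : ℕ)
    · rw [cone_eq_child C i h]
      rcases eq_or_ne a (C.label i) with rfl | hne
      · exact Or.inr ⟨C.parent i, C.parent_lt i h, by rw [Function.update_self]⟩
      · rw [Function.update_of_ne hne]
        rcases IH _ (C.parent_lt i h) a with hs | ⟨k, hk, he⟩
        · exact Or.inl hs
        · exact Or.inr ⟨k, lt_trans hk (C.parent_lt i h), he⟩
    · rw [cone_eq_root C i h]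
      exact Or.inl ⟨a, rfl⟩

lemma labelsUnder_eq_root (C : ToricConstellation r) (i : Fin r) (h : ¬ 0 < (i : ℕ)) :
    C.labelsUnder i = ∅ := by
  rw [labelsUnder, dif_neg h]

lemma labelsUnder_eq_child (C : ToricConstellation r) (i : Fin r) (h : 0 < (i : ℕ)) :
    C.labelsUnder i = insert (C.label i) (C.labelsUnder (C.parent i)) := by
  rw [labelsUnder, dif_pos h]

lemma cone_of_not_labelsUnder (C : ToricConstellation r) :
    ∀ i : Fin r, ∀ a : Fin 3, a ∉ C.labelsUnder i → C.cone i a = Pi.single a 1 := by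
  intro i
  induction i using fin_strong_induction with
  | H i IH =>
    intro a ha
    by_cases h : 0 < (i : ℕ)
    · rw [labelsUnder_eq_child C i h, Finset.mem_insert] at ha
      push_neg at ha
      rw [cone_eq_child C i h, Function.update_of_ne ha.1]
      exact IH _ (C.parent_lt i h) a ha.2
    · rw [cone_eq_root C i h]

end ToricConstellation

namespace ToricCluster

variable {r : ℕ}

lemma N_eq (A : ToricCluster r) (i : Fin r) :
    A.N i = A.m i + ∑ j ∈ A.anteSet i, A.N j := by
  rw [N, Finset.sum_attach]

lemma nu_eq (A : ToricCluster r) (i : Fin r) :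
    A.nu i = 3 + ∑ j ∈ A.anteSet i, (A.nu j - 1) := by
  rw [nu]
  congr 1
  exact Finset.sum_attach _ fun k => A.nu k - 1

lemma mem_anteSet (A : ToricCluster r) (i j : Fin r) :
    j ∈ A.anteSet i ↔ (j : ℕ) < (i : ℕ) ∧ i ≠ j ∧
      ∃ a, A.toToricConstellation.cone i a = A.toToricConstellation.v j := by
  rw [anteSet, Finset.mem_filter]
  simp only [Finset.mem_univ, true_and, Prox, and_assoc]

end ToricCluster

theorem stmt9 {r : ℕ} (A : ToricCluster r) (hA : A.Idealistic)
    (n : ℕ) (q : ℕ → Fin r) (c : Fin 3)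
    (hc : c ∉ labelsUnder A.toToricConstellation (q 0))
    (hchain : ∀ s, s < n →
      IsChild A.toToricConstellation (q (s + 1)) (q s)
      ∧ A.toToricConstellation.label (q (s + 1)) = c)
    (hm : ∀ s, s ≤ n → A.m (q s) = A.m (q 0)) :
    (∀ i, i ≤ n → A.nu (q i) = ((i : ℤ) + 1) * A.nu (q 0) - (i : ℤ)
        ∧ A.N (q i) = ((i : ℤ) + 1) * A.N (q 0))
    ∧ (∀ b : ℕ, 0 < b → (b : ℤ) ∣ A.N (q 0) → ∀ i, i ≤ n → (b : ℤ) ∣ A.N (q i))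
    ∧ (0 < n → ∀ c' d' : ℕ, 0 < c' → 0 < d' → Nat.Coprime c' d' →
        A.nu (q n) * (d' : ℤ) = (c' : ℤ) * A.N (q n) → ¬ ((d' : ℤ) ∣ A.N (q 0))) := by
  classical
  have hchild : ∀ s, s < n → IsChild A.toToricConstellation (q (s + 1)) (q s) :=
    fun s hs => (hchain s hs).1
  have hidx : ∀ s, s < n → (q s : ℕ) < (q (s + 1) : ℕ) := by
    intro s hs
    have h := A.parent_lt (q (s + 1)) (hchild s hs).1
    rwa [(hchild s hs).2] at h
  have hmono : ∀ s, s ≤ n → (q 0 : ℕ) ≤ (q s : ℕ) := by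
    intro s
    induction s with
    | zero => intro _; exact le_rfl
    | succ s ih =>
      intro hs
      have h1 := ih (by omega)
      have h2 := hidx s (by omega)
      omega
  have hcone : ∀ s, s < n → A.toToricConstellation.cone (q (s + 1)) =
      Function.update (A.toToricConstellation.cone (q 0)) c (A.toToricConstellation.v (q s)) := by
    intro s
    induction s with
    | zero =>
      intro hs
      rw [cone_eq_child _ _ (hchild 0 hs).1, (hchild 0 hs).2, (hchain 0 hs).2]
    | succ s ih =>
      intro hs
      rw [cone_eq_child _ _ (hchild (s + 1) hs).1, (hchild (s + 1) hs).2, (hchain (s + 1) hs).2,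
        ih (by omega), Function.update_idem]
  have hante : ∀ s, s < n → A.anteSet (q (s + 1)) = insert (q s) (A.anteSet (q 0)) := by
    intro s hs
    ext j
    rw [Finset.mem_insert, mem_anteSet, mem_anteSet]
    constructor
    · rintro ⟨hjlt, hne, a, ha⟩
      rw [hcone s hs] at ha
      rcases eq_or_ne a c with rfl | hac
      · rw [Function.update_self] at ha
        exact Or.inl (v_injective_s9 _ ha).symm
      · rw [Function.update_of_ne hac] at ha
        right
        rcases cone_entry_cases _ (q 0) a with ⟨b, hb⟩ | ⟨k, hklt, hk⟩
        · rw [hb] at ha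
          exact absurd ha.symm (v_ne_single _ j b)
        · rw [hk] at ha
          have hjk : k = j := v_injective_s9 _ ha
          subst hjk
          exact ⟨hklt, Fin.ne_of_val_ne (by omega), a, hk⟩
    · rintro (rfl | ⟨hjlt, hne, a, ha⟩)
      · refine ⟨hidx s hs, Fin.ne_of_val_ne (by have := hidx s hs; omega), c, ?_⟩
        rw [hcone s hs, Function.update_self]
      · have hac : a ≠ c := by
          rintro rfl
          rw [cone_of_not_labelsUnder _ (q 0) a hc] at ha
          exact v_ne_single _ j a ha.symm
        have h0s := hmono s (le_of_lt hs)
        have hss := hidx s hs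
        refine ⟨by omega, Fin.ne_of_val_ne (by omega), a, ?_⟩
        rw [hcone s hs, Function.update_of_ne hac]
        exact ha
  have hnotmem : ∀ s, s ≤ n → q s ∉ A.anteSet (q 0) := by
    intro s hsn hmem
    rw [mem_anteSet] at hmem
    have := hmono s hsn
    omega
  have hNrec : ∀ s, s < n → A.N (q (s + 1)) = A.N (q s) + A.N (q 0) := by
    intro s hs
    rw [N_eq, hante s hs, Finset.sum_insert (hnotmem s (le_of_lt hs))]
    have h0 := A.N_eq (q 0)
    have hm' : A.m (q (s + 1)) = A.m (q 0) := hm (s + 1) hs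
    omega
  have hnurec : ∀ s, s < n → A.nu (q (s + 1)) = A.nu (q s) + A.nu (q 0) - 1 := by
    intro s hs
    rw [nu_eq, hante s hs, Finset.sum_insert (hnotmem s (le_of_lt hs))]
    have h0 := A.nu_eq (q 0)
    omega
  have main : ∀ i, i ≤ n → A.nu (q i) = ((i : ℤ) + 1) * A.nu (q 0) - (i : ℤ)
      ∧ A.N (q i) = ((i : ℤ) + 1) * A.N (q 0) := by
    intro i
    induction i with
    | zero => intro _; constructor <;> push_cast <;> ring
    | succ i ih =>
      intro hin
      have hi : i < n := by omega
      obtain ⟨h1, h2⟩ := ih (by omega)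
      constructor
      · rw [hnurec i hi, h1]; push_cast; ring
      · rw [hNrec i hi, h2]; push_cast; ring
  refine ⟨main, ?_, ?_⟩
  · intro b hb hdvd i hin
    rw [(main i hin).2]
    exact Dvd.dvd.mul_left hdvd _
  · intro hn c' d' hc' hd' hcop heq hdvd
    obtain ⟨e, he⟩ := hdvd
    have h1 := (main n le_rfl).1
    have h2 := (main n le_rfl).2
    have hd0 : (d' : ℤ) ≠ 0 := by exact_mod_cast hd'.ne'
    have hnu : A.nu (q n) = (c' : ℤ) * ((n : ℤ) + 1) * e := by
      apply mul_right_cancel₀ hd0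
      rw [heq, h2, he]; ring
    have hdv : ((n : ℤ) + 1) ∣ (n : ℤ) :=
      ⟨A.nu (q 0) - (c' : ℤ) * e, by linear_combination h1 - hnu⟩
    have hle := Int.le_of_dvd (by exact_mod_cast hn) hdv
    omega
end
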